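/- If A ≤_wtt B and B ∈ KT(Δ⁰₂), then A ∈ KT(Δ⁰₂). -/

import Mathlib

/-! Common framework: prefix-free Kolmogorov complexity via a universal
prefix-free oracle machine, Δ⁰₂ functions and orders, Turing and wtt
reducibility, Ω, and the uniform measure on Cantor space. -/

/-- Finite binary strings, `2^{<ω}`. -/
abbrev BinStr := List Bool

/-- Reals, i.e. infinite binary sequences `2^ω`. -/
abbrev Seq2 := ℕ → Bool

/-- The initial segment `A↾n` of a real `A ∈ 2^ω`. -/
def restrict (A : Seq2) (n : ℕ) : BinStr := (List.range n).map A

/-- A prefix-free oracle machine, presented as a computable enumeration of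
axioms `(τ, p, y)`, meaning: on any oracle extending `τ`, the machine halts on
program `p` with output `y`.  Consistency says that for compatible oracle
strings the halting programs form a prefix-free set and outputs are unique. -/
structure PrefixOracleMachine where
  axioms : ℕ → Option (BinStr × BinStr × BinStr)
  axioms_computable : Computable axioms
  consistent : ∀ s t τ₁ p₁ y₁ τ₂ p₂ y₂,
    axioms s = some (τ₁, p₁, y₁) → axioms t = some (τ₂, p₂, y₂) →
    (τ₁ <+: τ₂ ∨ τ₂ <+: τ₁) → p₁ <+: p₂ → p₁ = p₂ ∧ y₁ = y₂

/-- `M.Computes A p y` : with oracle `A`, machine `M` halts on program `p` with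
output `y`. -/
def PrefixOracleMachine.Computes (M : PrefixOracleMachine) (A : Seq2) (p y : BinStr) : Prop :=
  ∃ s τ, M.axioms s = some (τ, p, y) ∧ ∃ n, τ = restrict A n

/-- A universal prefix-free oracle machine: it describes every string (relative
to every oracle), and it simulates every prefix-free oracle machine up to an
additive constant in the length of programs. -/
structure UniversalPrefixMachine extends PrefixOracleMachine where
  total : ∀ (A : Seq2) (y : BinStr), ∃ p, toPrefixOracleMachine.Computes A p y
  universal : ∀ M : PrefixOracleMachine, ∃ c : ℕ, ∀ (A : Seq2) (p y : BinStr),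
    M.Computes A p y →
      ∃ q, toPrefixOracleMachine.Computes A q y ∧ q.length ≤ p.length + c

/-- `K^A(y)` : prefix-free Kolmogorov complexity of `y` relative to oracle `A`. -/
noncomputable def KOr (U : UniversalPrefixMachine) (A : Seq2) (y : BinStr) : ℕ :=
  sInf {n | ∃ p : BinStr, p.length = n ∧ U.toPrefixOracleMachine.Computes A p y}

/-- The all-zeros (recursive) oracle. -/
def zeroSeq : Seq2 := fun _ => false

/-- `K(y)` : (unrelativized) prefix-free Kolmogorov complexity. -/
noncomputable def Kc (U : UniversalPrefixMachine) (y : BinStr) : ℕ := KOr U zeroSeq y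

/-- `K(n)` : the complexity of the string of `n` zeros. -/
noncomputable def KcNat (U : UniversalPrefixMachine) (n : ℕ) : ℕ :=
  Kc U (List.replicate n false)

/-- `A ∈ KT(g)` : `A` is K-trivial up to `g`. -/
def KT (U : UniversalPrefixMachine) (g : ℕ → ℕ) (A : Seq2) : Prop :=
  ∃ c : ℕ, ∀ n : ℕ, Kc U (restrict A n) ≤ KcNat U n + g n + c

/-- `A ∈ LK(f)` : `A` is low for K up to `f`. -/
def LK (U : UniversalPrefixMachine) (f : BinStr → ℕ) (A : Seq2) : Prop :=
  ∃ c : ℕ, ∀ σ : BinStr, Kc U σ ≤ KOr U A σ + f σ + c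

/-- The position of a string in the length-lexicographic ordering of `2^{<ω}`. -/
def strNum (σ : BinStr) : ℕ := σ.foldl (fun n b => 2 * n + (if b then 2 else 1)) 0

/-- A function `ℕ → ℕ` is Δ⁰₂ iff it has a recursive approximation. -/
def Delta02Fun (g : ℕ → ℕ) : Prop :=
  ∃ G : ℕ → ℕ → ℕ, Computable₂ G ∧ ∀ x, ∃ t, ∀ s ≥ t, G s x = g x

/-- A function `2^{<ω} → ℕ` is Δ⁰₂ iff it has a recursive approximation. -/
def Delta02StrFun (f : BinStr → ℕ) : Prop :=
  ∃ F : ℕ → BinStr → ℕ, Computable₂ F ∧ ∀ σ, ∃ t, ∀ s ≥ t, F s σ = f σ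

/-- A real is Δ⁰₂ iff it has a recursive approximation. -/
def Delta02Seq (A : Seq2) : Prop :=
  ∃ F : ℕ → ℕ → Bool, Computable₂ F ∧ ∀ x, ∃ t, ∀ s ≥ t, F s x = A x

/-- An order: an unbounded nondecreasing function `ℕ → ℕ`. -/
def IsOrder (g : ℕ → ℕ) : Prop := Monotone g ∧ ∀ b : ℕ, ∃ m, b < g m

/-- An order on strings: unbounded and nondecreasing with respect to the
length-lexicographic ordering of `2^{<ω}`. -/
def IsStrOrder (f : BinStr → ℕ) : Prop :=
  (∀ σ τ : BinStr, strNum σ ≤ strNum τ → f σ ≤ f τ) ∧ ∀ b : ℕ, ∃ σ, b < f σ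

/-- `A ∈ KT(Δ⁰₂)` : `A` is K-trivial up to every Δ⁰₂ order. -/
def KTDelta (U : UniversalPrefixMachine) (A : Seq2) : Prop :=
  ∀ g : ℕ → ℕ, Delta02Fun g → IsOrder g → KT U g A

/-- `A ∈ LK(Δ⁰₂)` : `A` is low for K up to every Δ⁰₂ order. -/
def LKDelta (U : UniversalPrefixMachine) (A : Seq2) : Prop :=
  ∀ f : BinStr → ℕ, Delta02StrFun f → IsStrOrder f → LK U f A

/-- A Δ⁰₂ function is finite-to-one approximable if it has a recursive
approximation `F` such that for every `n`, for all but finitely many `m`,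
`F s m > n` for all stages `s`. -/
def FinToOneApprox (f : ℕ → ℕ) : Prop :=
  ∃ F : ℕ → ℕ → ℕ, Computable₂ F ∧ (∀ x, ∃ t, ∀ s ≥ t, F s x = f x) ∧
    ∀ n : ℕ, {m : ℕ | ∃ s, F s m ≤ n}.Finite

/-- A Turing functional, presented as a computable enumeration of axioms
`(τ, n, b)`, meaning: on any oracle extending `τ`, the output bit `n` is `b`. -/
structure TuringFunctional where
  axioms : ℕ → Option (BinStr × ℕ × Bool)
  axioms_computable : Computable axioms
  consistent : ∀ s t τ₁ n₁ b₁ τ₂ n₂ b₂,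
    axioms s = some (τ₁, n₁, b₁) → axioms t = some (τ₂, n₂, b₂) →
    (τ₁ <+: τ₂ ∨ τ₂ <+: τ₁) → n₁ = n₂ → b₁ = b₂

/-- `Φ.Computes B A` : `Φ^B = A`. -/
def TuringFunctional.Computes (Φ : TuringFunctional) (B A : Seq2) : Prop :=
  ∀ n : ℕ, ∃ s k, Φ.axioms s = some (restrict B k, n, A n)

/-- Turing reducibility `A ≤_T B`. -/
def TuringLE (A B : Seq2) : Prop := ∃ Φ : TuringFunctional, Φ.Computes B A

/-- Weak truth-table reducibility `A ≤_wtt B` : a Turing reduction whose use is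
bounded by a recursive function. -/
def WttLE (A B : Seq2) : Prop :=
  ∃ (Φ : TuringFunctional) (u : ℕ → ℕ), Computable u ∧
    ∀ n : ℕ, ∃ s k, k ≤ u n ∧ Φ.axioms s = some (restrict B k, n, A n)

/-- The effective join `A ⊕ B`. -/
def join (A B : Seq2) : Seq2 := fun n => if n % 2 = 0 then A (n / 2) else B (n / 2)

/-- `A` is Martin-Löf random: `K(A↾n) ≥ n - c` for all `n`. -/
def MLRandom (U : UniversalPrefixMachine) (A : Seq2) : Prop :=
  ∃ c : ℕ, ∀ n : ℕ, n ≤ Kc U (restrict A n) + c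

/-- `A` is infinitely often K-trivial. -/
def InfOftenKTrivial (U : UniversalPrefixMachine) (A : Seq2) : Prop :=
  ∃ c : ℕ, {n : ℕ | Kc U (restrict A n) ≤ KcNat U n + c}.Infinite

/-- K-reducibility `B ≤_K A`. -/
def KLE (U : UniversalPrefixMachine) (B A : Seq2) : Prop :=
  ∃ c : ℕ, ∀ n : ℕ, Kc U (restrict B n) ≤ Kc U (restrict A n) + c

/-- LK-reducibility `A ≤_LK B`. -/
def LKLE (U : UniversalPrefixMachine) (A B : Seq2) : Prop :=
  ∃ c : ℕ, ∀ σ : BinStr, KOr U B σ ≤ KOr U A σ + c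

/-- `A` is weakly low for K: `K(σ) ≤ K^A(σ) + c` for infinitely many strings σ. -/
def WeaklyLowForK (U : UniversalPrefixMachine) (A : Seq2) : Prop :=
  ∃ c : ℕ, {σ : BinStr | Kc U σ ≤ KOr U A σ + c}.Infinite

/-- Chaitin's Ω : the measure of the domain of the universal machine. -/
noncomputable def Omega (U : UniversalPrefixMachine) : ℝ :=
  ∑' p : {p : BinStr // ∃ y, U.toPrefixOracleMachine.Computes zeroSeq p y},
    ((2 : ℝ) ^ (p : BinStr).length)⁻¹

/-- The `n`-th binary digit of a real number `x`. -/
noncomputable def realBit (x : ℝ) (n : ℕ) : Bool :=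
  decide (⌊x * 2 ^ (n + 1)⌋ % 2 = 1)

/-- `Ω↾n` : the length-`n` initial segment of the binary expansion of Ω. -/
noncomputable def omegaStr (U : UniversalPrefixMachine) (n : ℕ) : BinStr :=
  (List.range n).map (realBit (Omega U))

/-- `A` is low for Ω. -/
def LowForOmega (U : UniversalPrefixMachine) (A : Seq2) : Prop :=
  ∀ c : ℕ, ∃ n : ℕ, KOr U A (omegaStr U n) + c < n

/-- The uniform (coin-flipping) measure on `2^ω`, obtained as the image of
Lebesgue measure on `[0,1]` under the binary-expansion map. -/
noncomputable def cantorMeasure : MeasureTheory.Measure Seq2 :=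
  MeasureTheory.Measure.map (fun x : ℝ => fun n : ℕ => realBit x n)
    (MeasureTheory.volume.restrict (Set.Icc (0 : ℝ) 1))


/-! ### Auxiliary material for stmt11 -/

open Primrec in
private lemma pr_band : Primrec₂ (· && ·) := Primrec.dom_bool₂ _

/-- `ubar u n = u 0 + (u 1 + 1) + ... + (u n + 1)`, a strictly increasing
computable function dominating `u`. -/
def ubar (u : ℕ → ℕ) : ℕ → ℕ := fun n =>
  Nat.rec (u 0) (fun k acc => acc + u (k + 1) + 1) n

lemma ubar_succ (u : ℕ → ℕ) (n : ℕ) : ubar u (n + 1) = ubar u n + u (n + 1) + 1 := rfl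

lemma ubar_strictMono (u : ℕ → ℕ) : StrictMono (ubar u) :=
  strictMono_nat_of_lt_succ fun n => by rw [ubar_succ]; omega

lemma le_ubar (u : ℕ → ℕ) (n : ℕ) : u n ≤ ubar u n := by
  cases n with
  | zero => exact le_of_eq rfl
  | succ k => rw [ubar_succ]; omega

lemma self_le_ubar (u : ℕ → ℕ) (n : ℕ) : n ≤ ubar u n := by
  induction n with
  | zero => exact Nat.zero_le _
  | succ k ih => rw [ubar_succ]; omega

lemma ubar_computable {u : ℕ → ℕ} (hu : Computable u) : Computable (ubar u) := by
  have h : Computable₂ (fun (_ : ℕ) (p : ℕ × ℕ) => p.2 + u (p.1 + 1) + 1) :=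
    Primrec.nat_add.to_comp.comp
      (Primrec.nat_add.to_comp.comp (Computable.snd.comp Computable.snd)
        (hu.comp (Computable.succ.comp (Computable.fst.comp Computable.snd))))
      (Computable.const 1)
  exact Computable.nat_rec Computable.id (Computable.const (u 0)) h

/-- Inverse of `ubar`. -/
def invu (u : ℕ → ℕ) (m : ℕ) : ℕ := Nat.findGreatest (fun k => ubar u k ≤ m) m

lemma invu_eq_rec (u : ℕ → ℕ) (m : ℕ) :
    invu u m = Nat.rec 0 (fun k acc => if ubar u (k + 1) ≤ m then k + 1 else acc) m := by
  suffices h : ∀ b : ℕ, Nat.findGreatest (fun k => ubar u k ≤ m) b =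
      Nat.rec 0 (fun k acc => if ubar u (k + 1) ≤ m then k + 1 else acc) b from h m
  intro b
  induction b with
  | zero => rfl
  | succ k ih => rw [Nat.findGreatest_succ, ih]

lemma invu_computable {u : ℕ → ℕ} (hu : Computable u) : Computable (invu u) := by
  have hc : Computable (fun p : ℕ × ℕ × ℕ => decide (ubar u (p.2.1 + 1) ≤ p.1)) :=
    Primrec.nat_le.decide.to_comp.comp
      ((ubar_computable hu).comp (Computable.succ.comp (Computable.fst.comp Computable.snd)))
      Computable.fst
  have h : Computable₂ (fun (m : ℕ) (p : ℕ × ℕ) =>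
      if ubar u (p.1 + 1) ≤ m then p.1 + 1 else p.2) := by
    have := Computable.cond hc
      (Computable.succ.comp (Computable.fst.comp Computable.snd))
      (Computable.snd.comp (Computable.snd (α := ℕ) (β := ℕ × ℕ)))
    exact Computable.of_eq this fun p => by by_cases h : ubar u (p.2.1 + 1) ≤ p.1 <;> simp [h]
  exact ((Computable.nat_rec Computable.id (Computable.const 0) h).of_eq
    fun m => (invu_eq_rec u m).symm)

lemma invu_mono (u : ℕ → ℕ) : Monotone (invu u) := fun a b hab => by
  calc Nat.findGreatest (fun k => ubar u k ≤ a) a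
      ≤ Nat.findGreatest (fun k => ubar u k ≤ b) a :=
        Nat.findGreatest_mono_left (fun n h => le_trans h hab) a
    _ ≤ Nat.findGreatest (fun k => ubar u k ≤ b) b := Nat.findGreatest_mono_right _ hab

lemma invu_ubar (u : ℕ → ℕ) (n : ℕ) : invu u (ubar u n) = n := by
  apply le_antisymm
  · have h := Nat.findGreatest_spec (P := fun k => ubar u k ≤ ubar u n)
      (self_le_ubar u n) (le_refl _)
    exact (ubar_strictMono u).le_iff_le.mp h
  · exact Nat.le_findGreatest (self_le_ubar u n) (le_refl _)

/-! ### restrict and Kc lemmas -/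

@[simp] lemma restrict_length (A : Seq2) (n : ℕ) : (restrict A n).length = n := by
  simp [restrict]

lemma restrict_getElem (A : Seq2) {n i : ℕ} (h : i < n) :
    (restrict A n)[i]'(by simpa using h) = A i := by
  simp [restrict]

lemma restrict_prefix (A : Seq2) {k m : ℕ} (h : k ≤ m) :
    restrict A k <+: restrict A m := by
  rw [List.prefix_iff_eq_take]
  apply List.ext_getElem
  · simp [h]
  · intro i h1 h2
    rw [List.getElem_take]
    rw [restrict_getElem A (by simpa using h1), restrict_getElem A]
    simp at h2; omega

lemma restrict_zeroSeq (m : ℕ) : restrict zeroSeq m = List.replicate m false := by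
  apply List.ext_getElem
  · simp
  · intro i h1 h2
    rw [restrict_getElem zeroSeq (by simpa using h1)]
    simp [zeroSeq]

def repF (n : ℕ) : List Bool := List.replicate n false

lemma repF_eq_map (n : ℕ) : repF n = (List.range n).map fun _ => false := by
  apply List.ext_getElem <;> simp [repF]

lemma repF_primrec : Primrec repF := by
  have : Primrec fun n => (List.range n).map (fun _ : ℕ => false) :=
    Primrec.list_map Primrec.list_range (Primrec.const false)
  exact this.of_eq fun n => (repF_eq_map n).symm

lemma Kc_attained (U : UniversalPrefixMachine) (y : BinStr) :
    ∃ p : BinStr, p.length = Kc U y ∧ U.toPrefixOracleMachine.Computes zeroSeq p y := by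
  have hne : {n | ∃ p : BinStr, p.length = n ∧
      U.toPrefixOracleMachine.Computes zeroSeq p y}.Nonempty := by
    obtain ⟨p, hp⟩ := U.total zeroSeq y
    exact ⟨p.length, p, rfl, hp⟩
  exact Nat.sInf_mem hne

lemma Kc_le (U : UniversalPrefixMachine) {p y : BinStr}
    (h : U.toPrefixOracleMachine.Computes zeroSeq p y) : Kc U y ≤ p.length :=
  Nat.sInf_le ⟨p, rfl, h⟩

/-! ### Primitive recursive checks -/

/-- Boolean prefix test. -/
def pfxB (σ y : List Bool) : Bool :=
  decide (σ.length ≤ y.length) &&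
    decide (σ = (List.range σ.length).map fun i => y.getD i false)

lemma take_eq_map_range (y : List Bool) {n : ℕ} (h : n ≤ y.length) :
    y.take n = (List.range n).map fun i => y.getD i false := by
  apply List.ext_getElem
  · simpa using h
  · intro i h1 h2
    simp only [List.getElem_take, List.getElem_map, List.getElem_range]
    have hi : i < y.length := by simp at h1; omega
    rw [List.getD_eq_getElem _ _ hi]

lemma pfxB_iff (σ y : List Bool) : pfxB σ y = true ↔ σ <+: y := by
  simp only [pfxB, Bool.and_eq_true, decide_eq_true_eq]
  constructor
  · rintro ⟨h1, h2⟩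
    rw [List.prefix_iff_eq_take, take_eq_map_range y h1]
    exact h2
  · intro h
    refine ⟨h.length_le, ?_⟩
    rw [← take_eq_map_range y h.length_le, ← List.prefix_iff_eq_take]
    exact h

lemma pfxB_primrec : Primrec₂ pfxB := by
  have h1 : Primrec fun p : List Bool × List Bool => decide (p.1.length ≤ p.2.length) :=
    PrimrecPred.decide (Primrec.nat_le.comp (Primrec.list_length.comp Primrec.fst)
      (Primrec.list_length.comp Primrec.snd))
  have h2 : Primrec fun p : List Bool × List Bool =>
      (List.range p.1.length).map fun i => p.2.getD i false :=
    Primrec.list_map (Primrec.list_range.comp (Primrec.list_length.comp Primrec.fst))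
      (((Primrec.list_getD false).comp (Primrec.snd.comp Primrec.fst) Primrec.snd).to₂)
  have h3 : Primrec fun p : List Bool × List Bool =>
      decide (p.1 = (List.range p.1.length).map fun i => p.2.getD i false) :=
    PrimrecPred.decide (Primrec.eq.comp Primrec.fst h2)
  exact (pr_band.comp h1 h3 : Primrec _)

/-- The type of Turing-functional axioms. -/
abbrev TP := BinStr × ℕ × Bool

def stepB (D : List (Option TP)) (y : List Bool) (k : ℕ) : Bool :=
  Option.casesOn (D.getD k none) false fun t => decide (t.2.1 = k) && pfxB t.1 y

def checkB (D : List (Option TP)) (y : List Bool) : Bool :=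
  Nat.rec true (fun k acc => acc && stepB D y k) D.length

def extractD (D : List (Option TP)) : List Bool :=
  D.map fun d => Option.casesOn d false fun t => t.2.2

lemma stepB_primrec :
    Primrec fun q : (List (Option TP) × List Bool) × ℕ => stepB q.1.1 q.1.2 q.2 := by
  have ho : Primrec fun q : (List (Option TP) × List Bool) × ℕ => q.1.1.getD q.2 none :=
    (Primrec.list_getD none).comp (Primrec.fst.comp Primrec.fst) Primrec.snd
  have hg : Primrec₂ fun (q : (List (Option TP) × List Bool) × ℕ) (t : TP) =>
      decide (t.2.1 = q.2) && pfxB t.1 q.1.2 := by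
    have e1 : Primrec fun p : ((List (Option TP) × List Bool) × ℕ) × TP =>
        decide (p.2.2.1 = p.1.2) :=
      PrimrecPred.decide (Primrec.eq.comp (Primrec.fst.comp (Primrec.snd.comp Primrec.snd))
        (Primrec.snd.comp Primrec.fst))
    have e2 : Primrec fun p : ((List (Option TP) × List Bool) × ℕ) × TP =>
        pfxB p.2.1 p.1.1.2 :=
      pfxB_primrec.comp (Primrec.fst.comp Primrec.snd)
        (Primrec.snd.comp (Primrec.fst.comp Primrec.fst))
    exact (pr_band.comp e1 e2).to₂
  exact Primrec.option_casesOn ho (Primrec.const false) hg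

lemma checkB_primrec : Primrec fun p : List (Option TP) × List Bool => checkB p.1 p.2 := by
  have h := Primrec.nat_rec' (h := fun (p : List (Option TP) × List Bool) (q : ℕ × Bool) =>
      q.2 && stepB p.1 p.2 q.1)
    (Primrec.list_length.comp Primrec.fst) (Primrec.const true)
    (by
      have e1 : Primrec fun r : (List (Option TP) × List Bool) × ℕ × Bool => r.2.2 :=
        Primrec.snd.comp Primrec.snd
      have e2 : Primrec fun r : (List (Option TP) × List Bool) × ℕ × Bool =>
          stepB r.1.1 r.1.2 r.2.1 :=
        stepB_primrec.comp (Primrec.pair Primrec.fst (Primrec.fst.comp Primrec.snd))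
      exact (pr_band.comp e1 e2).to₂)
  exact h

lemma extractD_primrec : Primrec extractD := by
  have hg : Primrec₂ fun (_ : List (Option TP)) (d : Option TP) =>
      (Option.casesOn d false fun t => t.2.2 : Bool) := by
    have h : Primrec fun p : List (Option TP) × Option TP =>
        (Option.casesOn p.2 false fun t => t.2.2 : Bool) :=
      Primrec.option_casesOn Primrec.snd (Primrec.const false)
        ((Primrec.snd.comp (Primrec.snd.comp Primrec.snd)).to₂ :
          Primrec₂ fun (_ : List (Option TP) × Option TP) (t : TP) => t.2.2)
    exact h.to₂
  exact Primrec.list_map Primrec.id hg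

lemma checkB_iff (D : List (Option TP)) (y : List Bool) :
    checkB D y = true ↔ ∀ k < D.length, stepB D y k = true := by
  suffices h : ∀ n : ℕ, (Nat.rec true (fun k acc => acc && stepB D y k) n = true) ↔
      ∀ k < n, stepB D y k = true from h D.length
  intro n
  induction n with
  | zero => simp
  | succ m ih =>
    simp only [Bool.and_eq_true, ih]
    constructor
    · rintro ⟨h1, h2⟩ k hk
      rcases Nat.lt_succ_iff_lt_or_eq.mp hk with h | h
      · exact h1 k h
      · subst h; exact h2
    · intro h
      exact ⟨fun k hk => h k (hk.trans (Nat.lt_succ_self m)), h m (Nat.lt_succ_self m)⟩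

lemma stepB_iff (D : List (Option TP)) (y : List Bool) (k : ℕ) :
    stepB D y k = true ↔ ∃ σ b, D.getD k none = some (σ, k, b) ∧ σ <+: y := by
  unfold stepB
  cases h : D.getD k none with
  | none => simp
  | some t =>
    obtain ⟨σ, j, b⟩ := t
    simp only [Bool.and_eq_true, decide_eq_true_eq, pfxB_iff, Option.some.injEq,
      Prod.mk.injEq]
    constructor
    · rintro ⟨rfl, h2⟩; exact ⟨σ, b, ⟨rfl, rfl, rfl⟩, h2⟩
    · rintro ⟨σ', b', ⟨rfl, hjk, rfl⟩, h2⟩; exact ⟨hjk, h2⟩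

@[simp] lemma extractD_length (D : List (Option TP)) : (extractD D).length = D.length := by
  simp [extractD]

/-! ### Mapping a computable function over a list -/

def mapAux (f : ℕ → Option TP) (L : List ℕ) : ℕ → List (Option TP) := fun n =>
  Nat.rec [] (fun k acc => acc ++ [f (L.getD k 0)]) n

lemma mapAux_eq (f : ℕ → Option TP) (L : List ℕ) :
    ∀ n ≤ L.length, mapAux f L n = (L.take n).map f := by
  intro n
  induction n with
  | zero => intro _; simp [mapAux]
  | succ k ih =>
    intro h
    have hk : k < L.length := h
    show mapAux f L k ++ [f (L.getD k 0)] = ((L.take (k + 1)).map f)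
    rw [ih (le_of_lt hk)]
    have h1 : L.getD k 0 = L[k]'hk := List.getD_eq_getElem L 0 hk
    have h2 : L.take (k + 1) = L.take k ++ [L[k]'hk] := by
      rw [List.take_succ, List.getElem?_eq_getElem hk]; rfl
    rw [h1]
    conv_rhs => rw [h2, List.map_append]
    rfl

lemma mapAux_length_eq (f : ℕ → Option TP) (L : List ℕ) :
    mapAux f L L.length = L.map f := by
  rw [mapAux_eq f L L.length (le_refl _), List.take_length]

lemma map_computable {f : ℕ → Option TP} (hf : Computable f) :
    Computable fun L : List ℕ => L.map f := by
  have h : Computable₂ fun (L : List ℕ) (p : ℕ × List (Option TP)) =>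
      p.2 ++ [f (L.getD p.1 0)] :=
    Computable.list_concat.comp (Computable.snd.comp Computable.snd)
      (hf.comp ((Primrec.list_getD 0).to_comp.comp Computable.fst
        (Computable.fst.comp Computable.snd)))
  have := Computable.nat_rec Computable.list_length (Computable.const []) h
  exact this.of_eq fun L => mapAux_length_eq f L

/-! ### The auxiliary machine computing `0^(ubar u n)` from a program for `0^n` -/

def M2 (U : UniversalPrefixMachine) (u : ℕ → ℕ) (hu : Computable u) :
    PrefixOracleMachine where
  axioms s := (U.axioms s).map fun t => (t.1, t.2.1, repF (ubar u t.2.2.length))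
  axioms_computable := by
    refine Computable.option_map U.axioms_computable
      (?_ : Computable₂ fun (_ : ℕ) (t : BinStr × BinStr × BinStr) =>
        (t.1, t.2.1, repF (ubar u t.2.2.length)))
    exact Computable.pair (Computable.fst.comp Computable.snd)
      (Computable.pair (Computable.fst.comp (Computable.snd.comp Computable.snd))
        ((repF_primrec.to_comp).comp ((ubar_computable hu).comp
          (Computable.list_length.comp
            (Computable.snd.comp (Computable.snd.comp Computable.snd))))))
  consistent := by
    intro s t τ₁ p₁ y₁ τ₂ p₂ y₂ h1 h2 hcomp hpre
    simp only [Option.map_eq_some_iff] at h1 h2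
    obtain ⟨⟨a₁, b₁, c₁⟩, hU1, he1⟩ := h1
    obtain ⟨⟨a₂, b₂, c₂⟩, hU2, he2⟩ := h2
    simp only [Prod.mk.injEq] at he1 he2
    obtain ⟨rfl, rfl, rfl⟩ := he1
    obtain ⟨rfl, rfl, rfl⟩ := he2
    obtain ⟨rfl, rfl⟩ := U.consistent s t _ _ _ _ _ _ hU1 hU2 hcomp hpre
    exact ⟨rfl, rfl⟩

lemma KcNat_ubar_le (U : UniversalPrefixMachine) (u : ℕ → ℕ) (hu : Computable u) :
    ∃ c : ℕ, ∀ n : ℕ, KcNat U (ubar u n) ≤ KcNat U n + c := by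
  obtain ⟨c, hc⟩ := U.universal (M2 U u hu)
  refine ⟨c, fun n => ?_⟩
  obtain ⟨p, hlen, hp⟩ := Kc_attained U (List.replicate n false)
  obtain ⟨s, τ, hax, m, hτ⟩ := hp
  have hM2 : (M2 U u hu).Computes zeroSeq p (List.replicate (ubar u n) false) := by
    refine ⟨s, τ, ?_, m, hτ⟩
    show ((U.axioms s).map fun t => (t.1, t.2.1, repF (ubar u t.2.2.length))) = _
    rw [hax]
    simp [repF, List.length_replicate]
  obtain ⟨q, hq, hql⟩ := hc zeroSeq p _ hM2
  calc KcNat U (ubar u n) ≤ q.length := Kc_le U hq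
    _ ≤ p.length + c := hql
    _ = KcNat U n + c := by rw [hlen]; rfl

/-! ### The main machine: from a program for `B↾(ubar u n)`, compute `A↾n` -/

def M1core (o : Option (BinStr × BinStr × BinStr)) (D : List (Option TP)) (m : ℕ) :
    Option (BinStr × BinStr × BinStr) :=
  o.bind fun t =>
    if t.2.2.length = m ∧ checkB D t.2.2 = true then some (t.1, t.2.1, extractD D)
    else none

lemma M1core_primrec :
    Primrec fun x : Option (BinStr × BinStr × BinStr) × List (Option TP) × ℕ =>
      M1core x.1 x.2.1 x.2.2 := by
  refine Primrec.option_bind Primrec.fst ?_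
  have hcond : PrimrecPred fun p :
      (Option (BinStr × BinStr × BinStr) × List (Option TP) × ℕ) ×
        (BinStr × BinStr × BinStr) =>
      p.2.2.2.length = p.1.2.2 ∧ checkB p.1.2.1 p.2.2.2 = true := by
    have h1 : PrimrecPred fun p :
        (Option (BinStr × BinStr × BinStr) × List (Option TP) × ℕ) ×
          (BinStr × BinStr × BinStr) => p.2.2.2.length = p.1.2.2 :=
      Primrec.eq.comp
        (Primrec.list_length.comp (Primrec.snd.comp (Primrec.snd.comp Primrec.snd)))
        (Primrec.snd.comp (Primrec.snd.comp Primrec.fst))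
    have h2 : PrimrecPred fun p :
        (Option (BinStr × BinStr × BinStr) × List (Option TP) × ℕ) ×
          (BinStr × BinStr × BinStr) => checkB p.1.2.1 p.2.2.2 = true :=
      Primrec.eq.comp
        (checkB_primrec.comp (Primrec.pair
          (Primrec.fst.comp (Primrec.snd.comp Primrec.fst))
          (Primrec.snd.comp (Primrec.snd.comp Primrec.snd))))
        (Primrec.const true)
    exact h1.and h2
  have hthen : Primrec fun p :
      (Option (BinStr × BinStr × BinStr) × List (Option TP) × ℕ) ×
        (BinStr × BinStr × BinStr) =>
      (some (p.2.1, p.2.2.1, extractD p.1.2.1) : Option (BinStr × BinStr × BinStr)) :=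
    Primrec.option_some.comp
      (Primrec.pair (Primrec.fst.comp Primrec.snd)
        (Primrec.pair (Primrec.fst.comp (Primrec.snd.comp Primrec.snd))
          (extractD_primrec.comp (Primrec.fst.comp (Primrec.snd.comp Primrec.fst)))))
  exact (Primrec.ite hcond hthen
    (Primrec.const (none : Option (BinStr × BinStr × BinStr)))).to₂

def M1 (U : UniversalPrefixMachine) (Φ : TuringFunctional) (u : ℕ → ℕ)
    (hu : Computable u) : PrefixOracleMachine where
  axioms e := (Encodable.decode (α := ℕ × List ℕ) e).bind fun sl =>
    M1core (U.axioms sl.1) (sl.2.map Φ.axioms) (ubar u sl.2.length)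
  axioms_computable := by
    refine Computable.option_bind
      (Computable.decode : Computable (Encodable.decode (α := ℕ × List ℕ))) ?_
    have hg : Computable fun p : ℕ × (ℕ × List ℕ) =>
        ((U.axioms p.2.1, ((p.2.2).map Φ.axioms, ubar u (p.2.2).length)) :
          Option (BinStr × BinStr × BinStr) × List (Option TP) × ℕ) :=
      Computable.pair (U.axioms_computable.comp (Computable.fst.comp Computable.snd))
        (Computable.pair
          ((map_computable Φ.axioms_computable).comp (Computable.snd.comp Computable.snd))
          ((ubar_computable hu).comp
            (Computable.list_length.comp (Computable.snd.comp Computable.snd))))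
    exact (M1core_primrec.to_comp.comp hg : Computable _)
  consistent := by
    intro e₁ e₂ τ₁ p₁ z₁ τ₂ p₂ z₂ h1 h2 hcomp hpre
    simp only [Option.bind_eq_some_iff] at h1 h2
    obtain ⟨⟨s₁, L₁⟩, _, hM1⟩ := h1
    obtain ⟨⟨s₂, L₂⟩, _, hM2'⟩ := h2
    simp only [M1core, Option.bind_eq_some_iff] at hM1 hM2'
    obtain ⟨⟨a₁, b₁, c₁⟩, hU1, hif1⟩ := hM1
    obtain ⟨⟨a₂, b₂, c₂⟩, hU2, hif2⟩ := hM2'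
    by_cases hc1 : c₁.length = ubar u L₁.length ∧ checkB (L₁.map Φ.axioms) c₁ = true
    swap; · rw [if_neg hc1] at hif1; exact absurd hif1 (by simp)
    by_cases hc2 : c₂.length = ubar u L₂.length ∧ checkB (L₂.map Φ.axioms) c₂ = true
    swap; · rw [if_neg hc2] at hif2; exact absurd hif2 (by simp)
    rw [if_pos hc1] at hif1
    rw [if_pos hc2] at hif2
    simp only [Option.some.injEq, Prod.mk.injEq] at hif1 hif2
    obtain ⟨rfl, rfl, rfl⟩ := hif1
    obtain ⟨rfl, rfl, rfl⟩ := hif2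
    obtain ⟨rfl, rfl⟩ := U.consistent s₁ s₂ _ _ _ _ _ _ hU1 hU2 hcomp hpre
    refine ⟨rfl, ?_⟩
    -- now show the extracted strings agree
    have hlen : L₁.length = L₂.length := by
      have := hc1.1.symm.trans hc2.1
      exact (ubar_strictMono u).injective this
    set D₁ := L₁.map Φ.axioms with hD₁
    set D₂ := L₂.map Φ.axioms with hD₂
    have hD₁l : D₁.length = L₁.length := by simp [hD₁]
    have hD₂l : D₂.length = L₂.length := by simp [hD₂]
    apply List.ext_getElem
    · simp [hD₁, hD₂, hlen]
    · intro i hi1 hi2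
      have hiL1 : i < L₁.length := by simpa [hD₁] using hi1
      have hiL2 : i < L₂.length := by simpa [hD₂] using hi2
      have hst1 := (checkB_iff D₁ c₁).mp hc1.2 i (by omega)
      have hst2 := (checkB_iff D₂ c₁).mp hc2.2 i (by omega)
      obtain ⟨σ₁, bb₁, hD1i, hpre1⟩ := (stepB_iff D₁ c₁ i).mp hst1
      obtain ⟨σ₂, bb₂, hD2i, hpre2⟩ := (stepB_iff D₂ c₁ i).mp hst2
      have hΦ1 : Φ.axioms (L₁[i]'hiL1) = some (σ₁, i, bb₁) := by
        rw [← hD1i, List.getD_eq_getElem D₁ none (by omega)]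
        simp [hD₁]
      have hΦ2 : Φ.axioms (L₂[i]'hiL2) = some (σ₂, i, bb₂) := by
        rw [← hD2i, List.getD_eq_getElem D₂ none (by omega)]
        simp [hD₂]
      have hbb : bb₁ = bb₂ :=
        Φ.consistent _ _ _ _ _ _ _ _ hΦ1 hΦ2
          (List.prefix_or_prefix_of_prefix hpre1 hpre2) rfl
      show (extractD D₁)[i] = (extractD D₂)[i]
      rw [List.getD_eq_getElem D₁ none (by omega)] at hD1i
      rw [List.getD_eq_getElem D₂ none (by omega)] at hD2i
      simp only [extractD, List.getElem_map]
      rw [hD1i, hD2i, hbb]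

lemma Kc_restrict_le (U : UniversalPrefixMachine) (Φ : TuringFunctional) (u : ℕ → ℕ)
    (hu : Computable u) (A B : Seq2)
    (hspec : ∀ n : ℕ, ∃ s k, k ≤ u n ∧ Φ.axioms s = some (restrict B k, n, A n)) :
    ∃ c : ℕ, ∀ n : ℕ, Kc U (restrict A n) ≤ Kc U (restrict B (ubar u n)) + c := by
  obtain ⟨c, hc⟩ := U.universal (M1 U Φ u hu)
  refine ⟨c, fun n => ?_⟩
  set y := restrict B (ubar u n) with hy
  obtain ⟨p, hlen, hp⟩ := Kc_attained U y
  obtain ⟨s, τ, hax, m, hτ⟩ := hp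
  choose S K hK hΦ using hspec
  set L := (List.range n).map S with hL
  have hLlen : L.length = n := by simp [hL]
  set D := L.map Φ.axioms with hD
  have hDlen : D.length = n := by simp [hD, hLlen]
  have hDi : ∀ i, i < n → D.getD i none = some (restrict B (K i), i, A i) := by
    intro i hi
    rw [List.getD_eq_getElem D none (by omega)]
    have : D[i]'(by omega) = Φ.axioms (S i) := by
      simp [hD, hL]
    rw [this, hΦ i]
  have hcheck : checkB D y = true := by
    rw [checkB_iff]
    intro k hk
    rw [hDlen] at hk
    rw [stepB_iff]
    refine ⟨restrict B (K k), A k, hDi k hk, restrict_prefix B ?_⟩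
    calc K k ≤ u k := hK k
      _ ≤ ubar u k := le_ubar u k
      _ ≤ ubar u n := (ubar_strictMono u).monotone (le_of_lt hk)
  have hylen : y.length = ubar u n := by rw [hy]; simp
  have hextract : extractD D = restrict A n := by
    apply List.ext_getElem
    · simp [hDlen]
    · intro i h1 h2
      have hi : i < n := by simpa [hDlen] using h1
      simp only [extractD, List.getElem_map]
      have hDi' := hDi i hi
      rw [List.getD_eq_getElem D none (by omega)] at hDi'
      rw [hDi']
      show A i = (restrict A n)[i]'h2
      exact (restrict_getElem A hi).symm
  have hM1comp : (M1 U Φ u hu).Computes zeroSeq p (restrict A n) := by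
    refine ⟨Encodable.encode ((s, L) : ℕ × List ℕ), τ, ?_, m, hτ⟩
    show ((Encodable.decode (α := ℕ × List ℕ)
        (Encodable.encode ((s, L) : ℕ × List ℕ))).bind fun sl =>
      M1core (U.axioms sl.1) (sl.2.map Φ.axioms) (ubar u sl.2.length)) = some (τ, p, restrict A n)
    rw [Encodable.encodek]
    show M1core (U.axioms s) (L.map Φ.axioms) (ubar u L.length) = some (τ, p, restrict A n)
    rw [hax, hLlen]
    show (if y.length = ubar u n ∧ checkB (L.map Φ.axioms) y = true
        then some (τ, p, extractD (L.map Φ.axioms)) else none) = some (τ, p, restrict A n)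
    rw [if_pos ⟨hylen, hcheck⟩]
    rw [show L.map Φ.axioms = D from rfl, hextract]
  obtain ⟨q, hq, hql⟩ := hc zeroSeq p _ hM1comp
  calc Kc U (restrict A n) ≤ q.length := Kc_le U hq
    _ ≤ p.length + c := hql
    _ = Kc U y + c := by rw [hlen]

/-- KT(Δ⁰₂) is closed downwards under wtt-reducibility. -/
theorem stmt11 (U : UniversalPrefixMachine) (A B : Seq2)
    (hw : WttLE A B) (hB : KTDelta U B) : KTDelta U A := by
  obtain ⟨Φ, u, hu, hspec⟩ := hw
  intro g hg hord
  obtain ⟨c1, hc1⟩ := Kc_restrict_le U Φ u hu A B hspec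
  obtain ⟨c2, hc2⟩ := KcNat_ubar_le U u hu
  set h : ℕ → ℕ := fun m => g (invu u m) with hh
  have hhd : Delta02Fun h := by
    obtain ⟨G, hG, hGa⟩ := hg
    exact ⟨fun s m => G s (invu u m),
      hG.comp Computable.fst ((invu_computable hu).comp Computable.snd),
      fun m => hGa (invu u m)⟩
  have hho : IsOrder h := by
    constructor
    · exact fun a b hab => hord.1 (invu_mono u hab)
    · intro b
      obtain ⟨nn, hnn⟩ := hord.2 b
      refine ⟨ubar u nn, ?_⟩
      show b < g (invu u (ubar u nn))
      rw [invu_ubar]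
      exact hnn
  obtain ⟨cB, hcB⟩ := hB h hhd hho
  refine ⟨c1 + c2 + cB, fun n => ?_⟩
  have e1 := hc1 n
  have e2 := hcB (ubar u n)
  have e3 := hc2 n
  have e4 : h (ubar u n) = g n := by
    show g (invu u (ubar u n)) = g n
    rw [invu_ubar]
  rw [e4] at e2
  omega
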